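/- Let G be a group in which every element has a finite conjugacy class (an FC group). If G is not abelian-by-finite (i.e., G has no abelian subgroup of finite index), then there exist sequences (gᵢ) and (hᵢ) in G such that for each i, gᵢ and hᵢ do not commute, and such that the subgroups Gᵢ generated by the conjugacy classes of gᵢ and hᵢ satisfy: every element of Gᵢ commutes with every element of Gⱼ whenever i ≠ j. -/

import Mathlib

open Subgroup MulAction

namespace ExistsCommAux

variable {G : Type*} [Group G]

def conjSet (g : G) : Set G := {x : G | ∃ y : G, x = y * g * y⁻¹}

lemma self_mem_conjSet (g : G) : g ∈ conjSet g := ⟨1, by simp⟩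

lemma conj_mem_conjSet {g x : G} (hx : x ∈ conjSet g) (y : G) : y * x * y⁻¹ ∈ conjSet g := by
  obtain ⟨z, rfl⟩ := hx; exact ⟨y * z, by group⟩

lemma finiteIndex_centralizer_singleton (hfc : ∀ g : G, Set.Finite (conjSet g)) (g : G) :
    (Subgroup.centralizer {g}).FiniteIndex := by
  have horb : MulAction.orbit (ConjAct G) g = conjSet g := by
    ext x
    constructor
    · rintro ⟨m, rfl⟩; exact ⟨ConjAct.ofConjAct m, by simp [ConjAct.smul_def]⟩
    · rintro ⟨y, rfl⟩; exact ⟨ConjAct.toConjAct y, by simp [ConjAct.smul_def]⟩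
  haveI : Finite (MulAction.orbit (ConjAct G) g) := by
    rw [horb]; exact (hfc g).to_subtype
  haveI : Finite (ConjAct G ⧸ MulAction.stabilizer (ConjAct G) g) :=
    Finite.of_equiv _ (MulAction.orbitEquivQuotientStabilizer (ConjAct G) g)
  haveI : (MulAction.stabilizer (ConjAct G) g).FiniteIndex :=
    Subgroup.finiteIndex_of_finite_quotient
  rw [Subgroup.centralizer_eq_comap_stabilizer]
  constructor
  erw [Subgroup.index_comap_of_surjective _ (ConjAct.toConjAct (G := G)).surjective]
  exact Subgroup.FiniteIndex.index_ne_zero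

lemma finiteIndex_centralizer (hfc : ∀ g : G, Set.Finite (conjSet g)) {S : Set G}
    (hS : S.Finite) : (Subgroup.centralizer S).FiniteIndex := by
  have h : Subgroup.centralizer S = ⨅ s : S, Subgroup.centralizer {(s : G)} := by
    ext x
    simp [Subgroup.mem_centralizer_iff, Subgroup.mem_iInf, Subtype.forall]
  rw [h]
  haveI := hS.to_subtype
  exact Subgroup.finiteIndex_iInf fun s => finiteIndex_centralizer_singleton hfc s

lemma centralizer_normal {S : Set G} (hS : ∀ x ∈ S, ∀ y : G, y * x * y⁻¹ ∈ S) :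
    (Subgroup.centralizer S).Normal := by
  constructor
  intro n hn y
  rw [Subgroup.mem_centralizer_iff] at hn ⊢
  intro h hh
  have key := hn (y⁻¹ * h * y) (by simpa using hS h hh y⁻¹)
  have := congrArg (fun z => y * z * y⁻¹) key
  simp only [mul_assoc, mul_inv_cancel_left, inv_mul_cancel_left] at this ⊢
  simpa [mul_assoc] using this

lemma exists_noncomm (hG : ¬ ∃ A : Subgroup G, A.FiniteIndex ∧ ∀ a ∈ A, ∀ b ∈ A, a * b = b * a)
    (C : Subgroup G) (hC : C.FiniteIndex) :
    ∃ g, g ∈ C ∧ ∃ h, h ∈ C ∧ ¬ Commute g h := by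
  by_contra hcon
  push_neg at hcon
  exact hG ⟨C, hC, fun a ha b hb => (hcon a ha b hb)⟩

variable (G) in
def T : Type _ := {C : Subgroup G // C.Normal ∧ C.FiniteIndex}

noncomputable def pick (hG : ¬ ∃ A : Subgroup G, A.FiniteIndex ∧ ∀ a ∈ A, ∀ b ∈ A, a * b = b * a)
    (C : T G) : G × G :=
  ((exists_noncomm hG C.1 C.2.2).choose,
   (exists_noncomm hG C.1 C.2.2).choose_spec.2.choose)

variable (hG : ¬ ∃ A : Subgroup G, A.FiniteIndex ∧ ∀ a ∈ A, ∀ b ∈ A, a * b = b * a)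
variable (hfc : ∀ g : G, Set.Finite (conjSet g))

lemma pick_mem_left (C : T G) : (pick hG C).1 ∈ C.1 :=
  (exists_noncomm hG C.1 C.2.2).choose_spec.1

lemma pick_mem_right (C : T G) : (pick hG C).2 ∈ C.1 :=
  (exists_noncomm hG C.1 C.2.2).choose_spec.2.choose_spec.1

lemma pick_noncomm (C : T G) : ¬ Commute (pick hG C).1 (pick hG C).2 :=
  (exists_noncomm hG C.1 C.2.2).choose_spec.2.choose_spec.2

def SS (p : G × G) : Set G := conjSet p.1 ∪ conjSet p.2

lemma SS_conj_invariant (p : G × G) : ∀ x ∈ SS p, ∀ y : G, y * x * y⁻¹ ∈ SS p := by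
  rintro x (hx | hx) y
  · exact Or.inl (conj_mem_conjSet hx y)
  · exact Or.inr (conj_mem_conjSet hx y)

lemma SS_finite (hfc : ∀ g : G, Set.Finite (conjSet g)) (p : G × G) : (SS p).Finite :=
  (hfc p.1).union (hfc p.2)

noncomputable def nextC (hG : ¬ ∃ A : Subgroup G, A.FiniteIndex ∧ ∀ a ∈ A, ∀ b ∈ A, a * b = b * a)
    (hfc : ∀ g : G, Set.Finite (conjSet g)) (C : T G) : T G :=
  ⟨C.1 ⊓ Subgroup.centralizer (SS (pick hG C)),
   ⟨by
      have h1 := C.2.1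
      have h2 := centralizer_normal (SS_conj_invariant (pick hG C))
      constructor
      intro n hn y
      rw [Subgroup.mem_inf] at hn ⊢
      exact ⟨h1.conj_mem n hn.1 y, h2.conj_mem n hn.2 y⟩,
    by
      haveI := C.2.2
      haveI := finiteIndex_centralizer hfc (SS_finite hfc (pick hG C))
      infer_instance⟩⟩

noncomputable def seq (hG : ¬ ∃ A : Subgroup G, A.FiniteIndex ∧ ∀ a ∈ A, ∀ b ∈ A, a * b = b * a)
    (hfc : ∀ g : G, Set.Finite (conjSet g)) : ℕ → T G
  | 0 => ⟨⊤, ⟨inferInstance, inferInstance⟩⟩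
  | n + 1 => nextC hG hfc (seq hG hfc n)

lemma seq_succ_le (n : ℕ) : (seq hG hfc (n + 1)).1 ≤ (seq hG hfc n).1 := by
  show (nextC hG hfc (seq hG hfc n)).1 ≤ _
  exact inf_le_left

lemma seq_succ_le_centralizer (n : ℕ) :
    (seq hG hfc (n + 1)).1 ≤ Subgroup.centralizer (SS (pick hG (seq hG hfc n))) := by
  show (nextC hG hfc (seq hG hfc n)).1 ≤ _
  exact inf_le_right

lemma seq_antitone : ∀ {n m : ℕ}, n ≤ m → (seq hG hfc m).1 ≤ (seq hG hfc n).1 := by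
  intro n m h
  induction h with
  | refl => exact le_rfl
  | step h ih => exact (seq_succ_le hG hfc _).trans ih

lemma SS_subset_seq (n : ℕ) : SS (pick hG (seq hG hfc n)) ⊆ (seq hG hfc n).1 := by
  rintro x (⟨y, rfl⟩ | ⟨y, rfl⟩)
  · exact (seq hG hfc n).2.1.conj_mem _ (pick_mem_left hG _) y
  · exact (seq hG hfc n).2.1.conj_mem _ (pick_mem_right hG _) y

lemma main_comm {i j : ℕ} (hij : i < j)
    {a : G} (ha : a ∈ Subgroup.closure (SS (pick hG (seq hG hfc i))))
    {b : G} (hb : b ∈ Subgroup.closure (SS (pick hG (seq hG hfc j)))) :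
    Commute a b := by
  have hbC : b ∈ Subgroup.centralizer (SS (pick hG (seq hG hfc i))) := by
    have h1 : Subgroup.closure (SS (pick hG (seq hG hfc j))) ≤ (seq hG hfc j).1 :=
      (Subgroup.closure_le _).mpr (SS_subset_seq hG hfc j)
    have h2 : (seq hG hfc j).1 ≤ (seq hG hfc (i + 1)).1 := seq_antitone hG hfc hij
    exact seq_succ_le_centralizer hG hfc i (h2 (h1 hb))
  have hsub : SS (pick hG (seq hG hfc i)) ⊆ (Subgroup.centralizer {b} : Subgroup G) := by
    intro s hs
    rw [SetLike.mem_coe, Subgroup.mem_centralizer_iff]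
    intro x hx
    rw [Set.mem_singleton_iff] at hx
    subst hx
    exact (Subgroup.mem_centralizer_iff.mp hbC s hs).symm
  have := (Subgroup.closure_le _).mpr hsub ha
  rw [Subgroup.mem_centralizer_iff] at this
  exact ((this b rfl)).symm

end ExistsCommAux

theorem exists_commuting_nonabelian_subgroups {G : Type*} [Group G]
    (hfc : ∀ g : G, Set.Finite {x : G | ∃ y : G, x = y * g * y⁻¹})
    (hG : ¬ ∃ A : Subgroup G, A.FiniteIndex ∧ ∀ a ∈ A, ∀ b ∈ A, a * b = b * a) :
    ∃ g h : ℕ → G, (∀ i, ¬ Commute (g i) (h i)) ∧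
      ∀ i j, i ≠ j →
        ∀ a ∈ Subgroup.closure ({x : G | ∃ y : G, x = y * g i * y⁻¹} ∪
            {x : G | ∃ y : G, x = y * h i * y⁻¹}),
        ∀ b ∈ Subgroup.closure ({x : G | ∃ y : G, x = y * g j * y⁻¹} ∪
            {x : G | ∃ y : G, x = y * h j * y⁻¹}),
          Commute a b := by
  classical
  refine ⟨fun i => (ExistsCommAux.pick hG (ExistsCommAux.seq hG hfc i)).1,
          fun i => (ExistsCommAux.pick hG (ExistsCommAux.seq hG hfc i)).2,
          fun i => ExistsCommAux.pick_noncomm hG _, ?_⟩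
  intro i j hij a ha b hb
  rcases lt_or_gt_of_ne hij with h | h
  · exact ExistsCommAux.main_comm hG hfc h ha hb
  · exact (ExistsCommAux.main_comm hG hfc h hb ha).symm
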